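/- For every z = (z_1, ẑ) ∈ E_{2m} there exists an automorphism F of E_{2m} such that F(z) = (q, 0, …, 0), where q = |z_1| (1 − |ẑ|²)^{−1/(2m)} and 0 ≤ q < 1. -/

import Mathlib

noncomputable section

/-- The pseudo-egg `E_{2m} ⊆ ℂ^n` with `n = k + 1`, written as `ℂ × ℂ^k`. -/
def E2m (k : ℕ) (m : ℝ) : Set (ℂ × (Fin k → ℂ)) :=
  {z | ‖z.1‖ ^ (2 * m) + ∑ j, ‖z.2 j‖ ^ 2 < 1}

/-- An automorphism of a domain `D`: a holomorphic bijection of `D` onto itself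
whose inverse is holomorphic. -/
def IsAutomorphismOf {X : Type*} [NormedAddCommGroup X] [NormedSpace ℂ X]
    (D : Set X) (F : X → X) : Prop :=
  DifferentiableOn ℂ F D ∧ Set.BijOn F D D ∧
    ∃ G : X → X, DifferentiableOn ℂ G D ∧
      (∀ z ∈ D, G (F z) = z) ∧ (∀ w ∈ D, F (G w) = w)

set_option linter.unusedSectionVars false
set_option linter.unusedVariables false

open Complex Finset

namespace EggAux

/-- Möbius-type map on `ℂ × ℂ^k`. -/
def moeb (m r : ℝ) {k : ℕ} [NeZero k] (p : ℂ × (Fin k → ℂ)) : ℂ × (Fin k → ℂ) :=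
  (p.1 * Complex.exp ((1/(m:ℂ)) *
      (((Real.log (1 - r^2))/2 : ℝ) - Complex.log (1 - (r:ℂ) * p.2 0))),
   fun j => if j = 0 then (p.2 0 - (r:ℂ)) / (1 - (r:ℂ) * p.2 0)
            else (Real.sqrt (1 - r^2) : ℂ) * p.2 j / (1 - (r:ℂ) * p.2 0))

variable {k : ℕ} [NeZero k] {m r : ℝ}

lemma sum_lt_one {p : ℂ × (Fin k → ℂ)} (hp : p ∈ E2m k m) :
    ∑ j, ‖p.2 j‖ ^ 2 < 1 := by
  have h0 : (0:ℝ) ≤ ‖p.1‖ ^ (2*m) := Real.rpow_nonneg (norm_nonneg _) _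
  have := hp
  simp only [E2m, Set.mem_setOf_eq] at this
  linarith

lemma abs_w0_lt_one {p : ℂ × (Fin k → ℂ)} (hp : p ∈ E2m k m) :
    ‖p.2 0‖ < 1 := by
  have h1 : ‖p.2 0‖ ^ 2 ≤ ∑ j, ‖p.2 j‖ ^ 2 :=
    Finset.single_le_sum (f := fun j => ‖p.2 j‖ ^ 2)
      (fun j _ => sq_nonneg _) (Finset.mem_univ 0)
  have h2 := sum_lt_one hp
  nlinarith [norm_nonneg (p.2 0)]

lemma d_re_pos (hr : |r| < 1) {w : ℂ} (hw : ‖w‖ < 1) :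
    0 < (1 - (r:ℂ) * w).re := by
  have hre : |((r:ℂ) * w).re| ≤ |r| * ‖w‖ := by
    rw [Complex.mul_re]
    simp only [Complex.ofReal_re, Complex.ofReal_im, zero_mul, sub_zero]
    rw [abs_mul]
    exact mul_le_mul_of_nonneg_left (Complex.abs_re_le_norm w) (abs_nonneg r)
  have h2 : |r| * ‖w‖ < 1 := by
    nlinarith [abs_nonneg r, norm_nonneg w]
  simp only [Complex.sub_re, Complex.one_re]
  have := abs_le.mp hre
  linarith

lemma d_ne_zero (hr : |r| < 1) {w : ℂ} (hw : ‖w‖ < 1) :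
    (1 - (r:ℂ) * w) ≠ 0 := by
  intro h
  have := d_re_pos (r := r) hr hw
  rw [h] at this; simp at this

lemma d_slit (hr : |r| < 1) {w : ℂ} (hw : ‖w‖ < 1) :
    (1 - (r:ℂ) * w) ∈ Complex.slitPlane := Or.inl (d_re_pos hr hw)

lemma one_sub_r_sq_pos (hr : |r| < 1) : 0 < 1 - r^2 := by nlinarith [abs_nonneg r, _root_.sq_abs r]

/-- Key real identity. -/
lemma key_identity (r : ℝ) (w : ℂ) :
    ‖1 - (r:ℂ)*w‖ ^ 2 - ‖w - (r:ℂ)‖ ^ 2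
      = (1 - r^2) * (1 - ‖w‖ ^ 2) := by
  rw [Complex.sq_norm, Complex.sq_norm, Complex.sq_norm]
  simp only [Complex.normSq_apply, Complex.sub_re, Complex.sub_im, Complex.one_re, Complex.one_im,
    Complex.mul_re, Complex.mul_im, Complex.ofReal_re, Complex.ofReal_im]
  ring


lemma abs_first (hm0 : 0 < m) (hr : |r| < 1) {p : ℂ × (Fin k → ℂ)}
    (hw : ‖p.2 0‖ < 1) :
    ‖(moeb m r p).1‖ ^ (2*m)
      = ‖p.1‖ ^ (2*m) * ((1 - r^2) / ‖1 - (r:ℂ) * p.2 0‖ ^ 2) := by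
  set d : ℂ := 1 - (r:ℂ) * p.2 0 with hd
  have hdne : d ≠ 0 := d_ne_zero hr hw
  have hdpos : 0 < ‖d‖ := norm_pos_iff.mpr hdne
  have habs : ‖(moeb m r p).1‖
      = ‖p.1‖ * Real.exp ((1/m) * ((Real.log (1-r^2))/2 - Real.log (‖d‖))) := by
    simp only [moeb]
    rw [norm_mul, Complex.norm_exp]
    congr 2
    have h1 : ((1:ℂ)/(m:ℂ)) = ((1/m : ℝ) : ℂ) := by push_cast; ring
    rw [h1, Complex.re_ofReal_mul, Complex.sub_re, Complex.log_re, Complex.ofReal_re, ← hd]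
  rw [habs, Real.mul_rpow (norm_nonneg _) (Real.exp_pos _).le]
  congr 1
  rw [Real.rpow_def_of_pos (Real.exp_pos _), Real.log_exp]
  have hm' : m ≠ 0 := ne_of_gt hm0
  have h2 : 1/m * ((Real.log (1-r^2))/2 - Real.log (‖d‖)) * (2*m)
      = Real.log (1-r^2) - 2 * Real.log (‖d‖) := by
    field_simp
    try ring
    try tauto
  rw [h2, Real.exp_sub, Real.exp_log (one_sub_r_sq_pos hr), two_mul, Real.exp_add,
    Real.exp_log hdpos]
  ring

lemma moeb_mem (hm0 : 0 < m) (hr : |r| < 1) {p : ℂ × (Fin k → ℂ)} (hp : p ∈ E2m k m) :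
    moeb m r p ∈ E2m k m := by
  have hw := abs_w0_lt_one hp
  have hdne : (1 - (r:ℂ) * p.2 0) ≠ 0 := d_ne_zero hr hw
  have hdpos : 0 < ‖1 - (r:ℂ) * p.2 0‖ := norm_pos_iff.mpr hdne
  have hD : 0 < ‖1 - (r:ℂ) * p.2 0‖ ^ 2 := by positivity
  set T : ℝ := ∑ j ∈ Finset.univ.erase 0, ‖p.2 j‖ ^ 2 with hT
  have hsum : ∑ j, ‖(moeb m r p).2 j‖ ^ 2
      = (‖p.2 0 - (r:ℂ)‖ ^ 2 + (1-r^2) * T)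
        / ‖1 - (r:ℂ) * p.2 0‖ ^ 2 := by
    rw [← Finset.add_sum_erase _ _ (Finset.mem_univ (0 : Fin k))]
    have h0 : ((moeb m r p).2 0) = (p.2 0 - (r:ℂ)) / (1 - (r:ℂ) * p.2 0) := by simp [moeb]
    have hj : ∀ j ∈ Finset.univ.erase (0 : Fin k),
        ‖(moeb m r p).2 j‖ ^ 2
          = (1-r^2) * ‖p.2 j‖ ^ 2 / ‖1 - (r:ℂ) * p.2 0‖ ^ 2 := by
      intro j hj
      have hj0 : j ≠ 0 := Finset.ne_of_mem_erase hj
      have hje : ((moeb m r p).2 j)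
          = (Real.sqrt (1 - r^2) : ℂ) * p.2 j / (1 - (r:ℂ) * p.2 0) := by simp [moeb, hj0]
      rw [hje, norm_div, div_pow, norm_mul, mul_pow, Complex.norm_real, Real.norm_eq_abs,
        _root_.abs_of_nonneg (Real.sqrt_nonneg _), Real.sq_sqrt (one_sub_r_sq_pos hr).le]
    rw [h0, Finset.sum_congr rfl hj, norm_div, div_pow, ← Finset.sum_div, ← Finset.mul_sum, ← hT]
    ring
  have hp' : ‖p.1‖ ^ (2*m) + ∑ j, ‖p.2 j‖ ^ 2 < 1 := hp
  have hSsplit : ∑ j, ‖p.2 j‖ ^ 2 = ‖p.2 0‖ ^ 2 + T :=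
    (Finset.add_sum_erase _ _ (Finset.mem_univ (0 : Fin k))).symm
  have hkey := key_identity r (p.2 0)
  have hr2 := one_sub_r_sq_pos hr
  have ha : (0:ℝ) ≤ ‖p.1‖ ^ (2*m) := Real.rpow_nonneg (norm_nonneg _) _
  show ‖(moeb m r p).1‖ ^ (2*m) + ∑ j, ‖(moeb m r p).2 j‖ ^ 2 < 1
  rw [abs_first hm0 hr hw, hsum]
  have hlt : ‖p.1‖ ^ (2*m) * (1-r^2)
      + (‖p.2 0 - (r:ℂ)‖ ^ 2 + (1-r^2) * T)
      < ‖1 - (r:ℂ) * p.2 0‖ ^ 2 := by nlinarith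
  calc ‖p.1‖ ^ (2*m) * ((1-r^2) / ‖1 - (r:ℂ) * p.2 0‖ ^ 2)
        + (‖p.2 0 - (r:ℂ)‖ ^ 2 + (1-r^2) * T)
          / ‖1 - (r:ℂ) * p.2 0‖ ^ 2
      = (‖p.1‖ ^ (2*m) * (1-r^2)
          + (‖p.2 0 - (r:ℂ)‖ ^ 2 + (1-r^2) * T))
          / ‖1 - (r:ℂ) * p.2 0‖ ^ 2 := by ring
    _ < 1 := by rw [div_lt_one hD]; exact hlt

lemma moeb_comp (hm0 : 0 < m) (hr : |r| < 1) {p : ℂ × (Fin k → ℂ)}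
    (hw : ‖p.2 0‖ < 1) :
    moeb m (-r) (moeb m r p) = p := by
  have hdne : (1 - (r:ℂ) * p.2 0) ≠ 0 := d_ne_zero hr hw
  have hr2 : (0:ℝ) < 1 - r^2 := one_sub_r_sq_pos hr
  have hr2c : ((1 - r^2 : ℝ) : ℂ) ≠ 0 := Complex.ofReal_ne_zero.mpr (ne_of_gt hr2)
  set d : ℂ := 1 - (r:ℂ) * p.2 0 with hd
  set w0' : ℂ := (p.2 0 - (r:ℂ)) / d with hw0'
  have hmoeb0 : (moeb m r p).2 0 = w0' := by simp [moeb, hw0', hd]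
  have hd' : 1 - ((-r : ℝ):ℂ) * w0' = ((1 - r^2 : ℝ):ℂ) / d := by
    rw [hw0']
    push_cast
    field_simp
    ring
  have hd'ne : 1 - ((-r : ℝ):ℂ) * w0' ≠ 0 := by
    rw [hd']
    exact div_ne_zero hr2c hdne
  have hlog : Complex.log (1 - ((-r : ℝ):ℂ) * w0')
      = (Real.log (1 - r^2) : ℂ) - Complex.log d := by
    rw [hd', div_eq_mul_inv, Complex.log_ofReal_mul hr2 (inv_ne_zero hdne),
      Complex.log_inv _ (Complex.slitPlane_arg_ne_pi (d_slit hr hw))]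
    ring
  refine Prod.ext ?_ ?_
  · show (moeb m r p).1 * Complex.exp _ = p.1
    rw [hmoeb0]
    show p.1 * Complex.exp ((1/(m:ℂ)) * (((Real.log (1 - r^2))/2 : ℝ)
        - Complex.log (1 - (r:ℂ) * p.2 0))) * Complex.exp ((1/(m:ℂ)) *
        (((Real.log (1 - (-r)^2))/2 : ℝ) - Complex.log (1 - ((-r:ℝ):ℂ) * w0'))) = p.1
    rw [hlog, mul_assoc, ← Complex.exp_add, ← mul_add]
    have : (((Real.log (1 - r^2))/2 : ℝ) : ℂ) - Complex.log (1 - (r:ℂ) * p.2 0)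
        + ((((Real.log (1 - (-r)^2))/2 : ℝ) : ℂ)
          - ((Real.log (1 - r^2) : ℂ) - Complex.log d)) = 0 := by
      rw [neg_sq, hd]
      push_cast
      ring
    rw [this, mul_zero, Complex.exp_zero, mul_one]
  · show (fun j => if j = (0 : Fin k) then _ else _) = p.2
    funext j
    by_cases hj : j = 0
    · subst hj
      simp only [if_pos rfl, hmoeb0, eq_self_iff_true, if_true]
      rw [hd', hw0']
      have : ((-r : ℝ):ℂ) = -(r:ℂ) := by push_cast; ring
      rw [this]
      have hcne : (1:ℂ) - (r:ℂ)^2 ≠ 0 := by push_cast at hr2c; exact hr2c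
      field_simp
      rw [hd]
      push_cast
      ring
    · simp only [if_neg hj]
      have hmj : (moeb m r p).2 j = (Real.sqrt (1 - r^2) : ℂ) * p.2 j / d := by
        simp [moeb, hj, hd]
      rw [hmoeb0, hmj, hd', neg_sq]
      set sc : ℂ := ((Real.sqrt (1 - r^2) : ℝ) : ℂ) with hscdef
      have hcne : (1:ℂ) - (r:ℂ)^2 ≠ 0 := by push_cast at hr2c; exact hr2c
      have hs2 : sc^2 = 1 - (r:ℂ)^2 := by
        rw [hscdef, ← Complex.ofReal_pow, Real.sq_sqrt hr2.le]
        push_cast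
        ring
      push_cast
      field_simp
      linear_combination p.2 j * hs2

lemma moeb_diff (hr : |r| < 1) : DifferentiableOn ℂ (moeb m r) (E2m k m) := by
  have hw0 : Differentiable ℂ (fun p : ℂ × (Fin k → ℂ) => p.2 0) :=
    (ContinuousLinearMap.proj (R := ℂ) (φ := fun _ : Fin k => ℂ) 0).differentiable.comp
      differentiable_snd
  have hwj : ∀ j : Fin k, Differentiable ℂ (fun p : ℂ × (Fin k → ℂ) => p.2 j) := fun j =>
    (ContinuousLinearMap.proj (R := ℂ) (φ := fun _ : Fin k => ℂ) j).differentiable.comp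
      differentiable_snd
  have hden : Differentiable ℂ (fun p : ℂ × (Fin k → ℂ) => 1 - (r:ℂ) * p.2 0) :=
    (differentiable_const 1).sub ((differentiable_const _).mul hw0)
  have hdenne : ∀ p ∈ E2m k m, (1 - (r:ℂ) * p.2 0) ≠ 0 := fun p hp =>
    d_ne_zero hr (abs_w0_lt_one hp)
  have hlog : DifferentiableOn ℂ (fun p : ℂ × (Fin k → ℂ) =>
      Complex.log (1 - (r:ℂ) * p.2 0)) (E2m k m) := by
    intro p hp
    exact (hden.differentiableAt.clog (d_slit hr (abs_w0_lt_one hp))).differentiableWithinAt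
  have hfirst : DifferentiableOn ℂ (fun p : ℂ × (Fin k → ℂ) =>
      p.1 * Complex.exp ((1/(m:ℂ)) *
        (((Real.log (1 - r^2))/2 : ℝ) - Complex.log (1 - (r:ℂ) * p.2 0)))) (E2m k m) := by
    apply DifferentiableOn.mul differentiable_fst.differentiableOn
    apply DifferentiableOn.cexp
    exact (differentiableOn_const _).mul ((differentiableOn_const _).sub hlog)
  apply DifferentiableOn.prodMk hfirst
  rw [differentiableOn_pi]
  intro j
  intro p hp
  by_cases hj : j = 0
  · subst hj
    simp only [moeb, if_true, eq_self_iff_true, div_eq_mul_inv]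
    exact (((hw0 p).sub (differentiableAt_const _)).mul
      ((hden p).inv (hdenne p hp))).differentiableWithinAt
  · simp only [moeb, if_neg hj, div_eq_mul_inv]
    exact (((differentiableAt_const _).mul (hwj j p)).mul
      ((hden p).inv (hdenne p hp))).differentiableWithinAt

lemma exists_unitary (v : EuclideanSpace ℂ (Fin k)) :
    ∃ U : EuclideanSpace ℂ (Fin k) ≃ₗᵢ[ℂ] EuclideanSpace ℂ (Fin k),
      U v = EuclideanSpace.single 0 ((‖v‖ : ℝ) : ℂ) := by
  by_cases hv : v = 0
  · refine ⟨LinearIsometryEquiv.refl ℂ _, ?_⟩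
    subst hv
    simp [EuclideanSpace.single, PiLp.single]
  · set u : EuclideanSpace ℂ (Fin k) := (‖v‖⁻¹ : ℂ) • v with hu
    have hnu : ‖u‖ = 1 := by
      rw [hu, norm_smul]
      simp only [norm_inv, Complex.norm_real, Real.norm_eq_abs, abs_norm]
      field_simp [norm_ne_zero_iff.mpr hv]
    have horth : Orthonormal ℂ (Set.restrict {(0 : Fin k)} (fun _ : Fin k => u)) := by
      rw [orthonormal_iff_ite]
      rintro ⟨i, hi⟩ ⟨j, hj⟩
      simp only [Set.mem_singleton_iff] at hi hj
      have heq : (⟨i, hi⟩ : ({(0:Fin k)} : Set (Fin k))) = ⟨j, hj⟩ :=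
        Subtype.ext (hi.trans hj.symm)
      rw [heq, if_pos rfl]
      show inner ℂ u u = (1 : ℂ)
      rw [@inner_self_eq_norm_sq_to_K ℂ, hnu]
      norm_num
    obtain ⟨b, hb⟩ := horth.exists_orthonormalBasis_extension_of_card_eq
      (by simp [finrank_euclideanSpace_fin])
    refine ⟨b.repr, ?_⟩
    have hvu : v = ((‖v‖ : ℝ) : ℂ) • u := by
      rw [hu, smul_smul]
      rw [mul_inv_cancel₀ (by exact_mod_cast norm_ne_zero_iff.mpr hv : ((‖v‖:ℝ):ℂ) ≠ 0)]
      simp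
    have hb0 : b 0 = u := hb 0 rfl
    conv_lhs => rw [hvu, map_smul, ← hb0, b.repr_self]
    ext j
    rw [PiLp.smul_apply, EuclideanSpace.single_apply, EuclideanSpace.single_apply]
    by_cases hj : j = 0 <;> simp [hj]

lemma sum_abs_sq (x : EuclideanSpace ℂ (Fin k)) :
    ∑ j, ‖x j‖ ^ 2 = ‖x‖ ^ 2 := by
  rw [EuclideanSpace.norm_eq, Real.sq_sqrt (by positivity)]

end EggAux

open EggAux in
/-- For every `z = (z₁, ẑ) ∈ E_{2m}` there is an automorphism `F` of `E_{2m}` with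
`F(z) = (q, 0, …, 0)`, where `q = |z₁|(1−|ẑ|²)^{−1/(2m)}` and `0 ≤ q < 1`. -/
theorem statement4 (k : ℕ) (hk : 1 ≤ k) (m : ℝ) (hm0 : 0 < m) (hm : m < 1 / 2)
    (z : ℂ × (Fin k → ℂ)) (hz : z ∈ E2m k m) :
    ∃ F : (ℂ × (Fin k → ℂ)) → (ℂ × (Fin k → ℂ)),
      IsAutomorphismOf (E2m k m) F ∧
      F z = (((‖z.1‖ * (1 - ∑ j, ‖z.2 j‖ ^ 2) ^ (-(1 / (2 * m))) : ℝ) : ℂ),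
        0) ∧
      0 ≤ ‖z.1‖ * (1 - ∑ j, ‖z.2 j‖ ^ 2) ^ (-(1 / (2 * m))) ∧
      ‖z.1‖ * (1 - ∑ j, ‖z.2 j‖ ^ 2) ^ (-(1 / (2 * m))) < 1 := by
  haveI : NeZero k := ⟨by omega⟩
  set S : ℝ := ∑ j, ‖z.2 j‖ ^ 2 with hSdef
  have hS0 : 0 ≤ S := Finset.sum_nonneg fun j _ => sq_nonneg _
  have hS1 : S < 1 := sum_lt_one hz
  set r : ℝ := Real.sqrt S with hrdef
  have hr0 : 0 ≤ r := Real.sqrt_nonneg _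
  have hr2 : r ^ 2 = S := Real.sq_sqrt hS0
  have hr1 : r < 1 := by nlinarith
  have hr : |r| < 1 := by rwa [_root_.abs_of_nonneg hr0]
  have hrneg : |(-r)| < 1 := by rwa [abs_neg]
  -- the unitary part
  set v : EuclideanSpace ℂ (Fin k) := (WithLp.equiv 2 (Fin k → ℂ)).symm z.2 with hvdef
  obtain ⟨U, hU⟩ := exists_unitary v
  have hnv : ‖v‖ = r := by
    have hsum : ∑ j, ‖v j‖ ^ 2 = S := by
      rw [hSdef]
      exact Finset.sum_congr rfl fun j _ => by
        rw [hvdef]; rfl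
    rw [EuclideanSpace.norm_eq, hsum]
  -- the rotation in the first coordinate
  set u₁ : ℂ := if z.1 = 0 then 1 else (starRingEnd ℂ) z.1 / (‖z.1‖ : ℂ) with hu₁def
  have habsu₁ : ‖u₁‖ = 1 := by
    rw [hu₁def]
    by_cases h : z.1 = 0
    · simp [h]
    · have : ‖z.1‖ ≠ 0 := norm_ne_zero_iff.mpr h
      rw [if_neg h, norm_div, Complex.norm_conj, Complex.norm_real, Real.norm_eq_abs, _root_.abs_of_nonneg
        (norm_nonneg _), div_self this]
  have hu₁ne : u₁ ≠ 0 := by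
    intro h
    rw [h] at habsu₁
    simp at habsu₁
  have hu₁z : u₁ * z.1 = (‖z.1‖ : ℂ) := by
    rw [hu₁def]
    by_cases h : z.1 = 0
    · simp [h]
    · have habs : (‖z.1‖ : ℂ) ≠ 0 := by
        simpa using norm_ne_zero_iff.mpr h
      rw [if_neg h]
      field_simp
      rw [mul_comm, Complex.mul_conj, Complex.normSq_eq_norm_sq]
      push_cast
      ring
  -- the linear automorphism
  set T : (Fin k → ℂ) →ₗ[ℂ] (Fin k → ℂ) :=
    ((WithLp.linearEquiv 2 ℂ (Fin k → ℂ)).toLinearMap.comp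
      U.toLinearEquiv.toLinearMap).comp
      (WithLp.linearEquiv 2 ℂ (Fin k → ℂ)).symm.toLinearMap with hTdef
  set Tinv : (Fin k → ℂ) →ₗ[ℂ] (Fin k → ℂ) :=
    ((WithLp.linearEquiv 2 ℂ (Fin k → ℂ)).toLinearMap.comp
      U.symm.toLinearEquiv.toLinearMap).comp
      (WithLp.linearEquiv 2 ℂ (Fin k → ℂ)).symm.toLinearMap with hTinvdef
  have hTapp : ∀ x : Fin k → ℂ, T x = U ((WithLp.equiv 2 (Fin k → ℂ)).symm x) := fun _ => rfl
  have hTinvapp : ∀ x : Fin k → ℂ,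
      Tinv x = U.symm ((WithLp.equiv 2 (Fin k → ℂ)).symm x) := fun _ => rfl
  have hTT : ∀ x : Fin k → ℂ, Tinv (T x) = x := by
    intro x
    rw [hTapp, hTinvapp]
    show (U.symm (U ((WithLp.equiv 2 (Fin k → ℂ)).symm x)) : Fin k → ℂ) = x
    rw [U.symm_apply_apply]
    rfl
  have hTTinv : ∀ x : Fin k → ℂ, T (Tinv x) = x := by
    intro x
    rw [hTapp, hTinvapp]
    show (U (U.symm ((WithLp.equiv 2 (Fin k → ℂ)).symm x)) : Fin k → ℂ) = x
    rw [U.apply_symm_apply]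
    rfl
  have hTsum : ∀ x : Fin k → ℂ, ∑ j, ‖T x j‖ ^ 2 = ∑ j, ‖x j‖ ^ 2 := by
    intro x
    rw [hTapp]
    have h1 : ∑ j, ‖(U ((WithLp.equiv 2 (Fin k → ℂ)).symm x)) j‖ ^ 2
        = ‖U ((WithLp.equiv 2 (Fin k → ℂ)).symm x)‖ ^ 2 := sum_abs_sq _
    have h2 : ∑ j, ‖x j‖ ^ 2
        = ‖(WithLp.equiv 2 (Fin k → ℂ)).symm x‖ ^ 2 := by
      exact sum_abs_sq ((WithLp.equiv 2 (Fin k → ℂ)).symm x)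
    rw [h1, h2, U.norm_map]
  have hTinvsum : ∀ x : Fin k → ℂ,
      ∑ j, ‖Tinv x j‖ ^ 2 = ∑ j, ‖x j‖ ^ 2 := by
    intro x
    conv_rhs => rw [← hTTinv x]
    rw [hTsum]
  set L : (ℂ × (Fin k → ℂ)) →ₗ[ℂ] (ℂ × (Fin k → ℂ)) :=
    (LinearMap.mulLeft ℂ u₁).prodMap T with hLdef
  set Linv : (ℂ × (Fin k → ℂ)) →ₗ[ℂ] (ℂ × (Fin k → ℂ)) :=
    (LinearMap.mulLeft ℂ u₁⁻¹).prodMap Tinv with hLinvdef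
  have hLapp : ∀ p : ℂ × (Fin k → ℂ), L p = (u₁ * p.1, T p.2) := fun _ => rfl
  have hLinvapp : ∀ p : ℂ × (Fin k → ℂ), Linv p = (u₁⁻¹ * p.1, Tinv p.2) := fun _ => rfl
  have hLL : ∀ p, Linv (L p) = p := by
    intro p
    rw [hLapp, hLinvapp]
    simp only [hTT]
    rw [← mul_assoc, inv_mul_cancel₀ hu₁ne, one_mul]
  have hLLinv : ∀ p, L (Linv p) = p := by
    intro p
    rw [hLinvapp, hLapp]
    simp only [hTTinv]
    rw [← mul_assoc, mul_inv_cancel₀ hu₁ne, one_mul]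
  have hLmem : ∀ p ∈ E2m k m, L p ∈ E2m k m := by
    intro p hp
    show ‖(L p).1‖ ^ (2*m) + ∑ j, ‖(L p).2 j‖ ^ 2 < 1
    rw [hLapp]
    simp only
    rw [norm_mul, habsu₁, one_mul, hTsum]
    exact hp
  have hLinvmem : ∀ p ∈ E2m k m, Linv p ∈ E2m k m := by
    intro p hp
    show ‖(Linv p).1‖ ^ (2*m) + ∑ j, ‖(Linv p).2 j‖ ^ 2 < 1
    rw [hLinvapp]
    simp only
    rw [norm_mul, norm_inv, habsu₁, inv_one, one_mul, hTinvsum]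
    exact hp
  have hLdiff : Differentiable ℂ (L : (ℂ × (Fin k → ℂ)) → (ℂ × (Fin k → ℂ))) :=
    L.toContinuousLinearMap.differentiable
  have hLinvdiff : Differentiable ℂ (Linv : (ℂ × (Fin k → ℂ)) → (ℂ × (Fin k → ℂ))) :=
    Linv.toContinuousLinearMap.differentiable
  have h1S : 0 < 1 - S := by linarith
  have hzabs : ‖z.1‖ ^ (2*m) < 1 - S := by
    have hz' : ‖z.1‖ ^ (2*m) + S < 1 := hz
    linarith
  -- the maps
  set F : (ℂ × (Fin k → ℂ)) → (ℂ × (Fin k → ℂ)) := (moeb m r) ∘ L with hFdef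
  set G : (ℂ × (Fin k → ℂ)) → (ℂ × (Fin k → ℂ)) := Linv ∘ (moeb m (-r)) with hGdef
  have hGF : ∀ p ∈ E2m k m, G (F p) = p := by
    intro p hp
    show Linv (moeb m (-r) (moeb m r (L p))) = p
    rw [moeb_comp hm0 hr (abs_w0_lt_one (hLmem p hp)), hLL]
  have hFG : ∀ w ∈ E2m k m, F (G w) = w := by
    intro w hw
    show moeb m r (L (Linv (moeb m (-r) w))) = w
    rw [hLLinv]
    have := moeb_comp (r := -r) hm0 hrneg (abs_w0_lt_one hw)
    rwa [neg_neg] at this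
  have hFmem : ∀ p ∈ E2m k m, F p ∈ E2m k m := fun p hp =>
    moeb_mem hm0 hr (hLmem p hp)
  have hGmem : ∀ w ∈ E2m k m, G w ∈ E2m k m := fun w hw =>
    hLinvmem _ (moeb_mem hm0 hrneg hw)
  have hFdiff : DifferentiableOn ℂ F (E2m k m) :=
    (moeb_diff hr).comp hLdiff.differentiableOn (fun p hp => hLmem p hp)
  have hGdiff : DifferentiableOn ℂ G (E2m k m) :=
    hLinvdiff.comp_differentiableOn (moeb_diff hrneg)
  -- value of F at z
  have hw0eq : T z.2 = fun j => if j = 0 then (r:ℂ) else 0 := by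
    rw [hTapp, ← hvdef, hU, hnv]
    funext j
    rw [EuclideanSpace.single_apply]
  have hLz : L z = ((‖z.1‖ : ℂ), fun j => if j = 0 then (r:ℂ) else 0) := by
    rw [hLapp, hu₁z, hw0eq]
  have hFz : F z = (((‖z.1‖ * (1 - S) ^ (-(1 / (2 * m))) : ℝ) : ℂ), 0) := by
    show moeb m r (L z) = _
    rw [hLz]
    have h0 : (fun j => if j = (0:Fin k) then (r:ℂ) else 0) 0 = (r:ℂ) := if_pos rfl
    have hden : 1 - (r:ℂ) * ((r:ℂ)) = ((1 - r^2 : ℝ) : ℂ) := by push_cast; ring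
    refine Prod.ext ?_ ?_
    · show (‖z.1‖ : ℂ) * Complex.exp ((1/(m:ℂ)) *
        (((Real.log (1 - r^2))/2 : ℝ) - Complex.log (1 - (r:ℂ) *
          ((fun j => if j = (0:Fin k) then (r:ℂ) else 0) 0)))) = _
      rw [h0, hden, ← Complex.ofReal_log (one_sub_r_sq_pos hr).le]
      have harg : ((1:ℂ)/(m:ℂ)) * (((Real.log (1 - r^2))/2 : ℝ)
          - ((Real.log (1 - r^2) : ℝ) : ℂ))
          = ((Real.log (1 - r^2) * (-(1/(2*m))) : ℝ) : ℂ) := by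
        push_cast
        have hmne : (m:ℂ) ≠ 0 := by exact_mod_cast ne_of_gt hm0
        field_simp
        ring
      rw [harg, ← Complex.ofReal_exp, ← Real.rpow_def_of_pos (one_sub_r_sq_pos hr),
        ← Complex.ofReal_mul]
      rw [hr2]
    · show (fun j => if j = (0:Fin k) then _ else _) = (0 : Fin k → ℂ)
      funext j
      by_cases hj : j = 0
      · subst hj
        simp
      · simp [hj]
  -- the inequalities
  have hqnonneg : 0 ≤ ‖z.1‖ * (1 - S) ^ (-(1 / (2 * m))) :=
    mul_nonneg (norm_nonneg _) (Real.rpow_nonneg h1S.le _)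
  have hpow : (0:ℝ) < (1 - S) ^ (1 / (2 * m)) := Real.rpow_pos_of_pos h1S _
  have habs1 : ‖z.1‖ < (1 - S) ^ (1 / (2 * m)) := by
    have h2m : (0:ℝ) < 1/(2*m) := by positivity
    have hlt := Real.rpow_lt_rpow (Real.rpow_nonneg (norm_nonneg z.1) _) hzabs h2m
    rwa [← Real.rpow_mul (norm_nonneg z.1),
      show (2*m) * (1/(2*m)) = 1 by field_simp, Real.rpow_one] at hlt
  have hqlt : ‖z.1‖ * (1 - S) ^ (-(1 / (2 * m))) < 1 := by
    rw [Real.rpow_neg h1S.le, ← div_eq_mul_inv, div_lt_one hpow]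
    exact habs1
  exact ⟨F, ⟨hFdiff, Set.InvOn.bijOn ⟨hGF, hFG⟩ hFmem hGmem,
    G, hGdiff, hGF, hFG⟩, hFz, hqnonneg, hqlt⟩
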